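/- Any weak polynomial identity for the pair (A₁, V) of degree at most 2 is zero; that is, if f ∈ F⟨X⟩ has degree ≤ 2 and f(u₁,…,u_m) = 0 in A₁ for all u₁,…,u_m ∈ V, then f = 0 in F⟨X⟩. -/

import Mathlib

/-- The defining relation of the Weyl algebra: `y * x = x * y + 1`. -/
inductive WeylRel (F : Type) [Field F] :
    FreeAlgebra F (Fin 2) → FreeAlgebra F (Fin 2) → Prop
  | rel : WeylRel F (FreeAlgebra.ι F 1 * FreeAlgebra.ι F 0)
      (FreeAlgebra.ι F 0 * FreeAlgebra.ι F 1 + 1)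

/-- The Weyl algebra A₁ over `F`. -/
abbrev Weyl (F : Type) [Field F] := RingQuot (WeylRel F)

/-- The generator `x` of the Weyl algebra. -/
noncomputable def Wx (F : Type) [Field F] : Weyl F :=
  RingQuot.mkAlgHom F (WeylRel F) (FreeAlgebra.ι F 0)

/-- The generator `y` of the Weyl algebra. -/
noncomputable def Wy (F : Type) [Field F] : Weyl F :=
  RingQuot.mkAlgHom F (WeylRel F) (FreeAlgebra.ι F 1)

/-- `V = F`-span of `{x, y}` inside the Weyl algebra. -/
noncomputable def WV (F : Type) [Field F] : Submodule F (Weyl F) :=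
  Submodule.span F {Wx F, Wy F}

open MvPolynomial

section Aux
variable (F : Type) [Field F]

noncomputable def opX : Module.End F (MvPolynomial (Fin 2) F) :=
  LinearMap.mulLeft F (MvPolynomial.X 0)

noncomputable def opY : Module.End F (MvPolynomial (Fin 2) F) :=
  (MvPolynomial.pderiv 0).toLinearMap + LinearMap.mulLeft F (MvPolynomial.X 1)

lemma op_rel : opY F * opX F = opX F * opY F + 1 := by
  apply LinearMap.ext; intro p
  simp [opX, opY, Module.End.mul_apply, LinearMap.mulLeft_apply, pderiv_mul, pderiv_X_self,
    LinearMap.add_apply]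
  ring

noncomputable def Phi : Weyl F →ₐ[F] Module.End F (MvPolynomial (Fin 2) F) :=
  RingQuot.liftAlgHom F ⟨FreeAlgebra.lift F ![opX F, opY F], by
    rintro _ _ ⟨⟩
    simp only [map_mul, map_add, map_one, FreeAlgebra.lift_ι_apply, Matrix.cons_val_zero,
      Matrix.cons_val_one, Matrix.head_cons]
    exact op_rel F⟩

noncomputable def ev : Weyl F →ₗ[F] MvPolynomial (Fin 2) F where
  toFun z := Phi F z 1
  map_add' := by intros; simp
  map_smul' := by intros; simp

lemma Phi_x : Phi F (Wx F) = opX F := by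
  simp [Phi, Wx, RingQuot.liftAlgHom_mkAlgHom_apply]

lemma Phi_y : Phi F (Wy F) = opY F := by
  simp [Phi, Wy, RingQuot.liftAlgHom_mkAlgHom_apply]

lemma ev_one : ev F 1 = 1 := by simp [ev]

lemma ev_x : ev F (Wx F) = X 0 := by simp [ev, Phi_x, opX]

lemma ev_y : ev F (Wy F) = X 1 := by simp [ev, Phi_y, opY]

lemma ev_xx : ev F (Wx F * Wx F) = X 0 * X 0 := by
  simp [ev, Phi_x, opX, Module.End.mul_apply]

lemma ev_xy : ev F (Wx F * Wy F) = X 0 * X 1 := by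
  simp [ev, Phi_x, Phi_y, opX, opY, Module.End.mul_apply, LinearMap.add_apply]

lemma ev_yx : ev F (Wy F * Wx F) = 1 + X 1 * X 0 := by
  simp [ev, Phi_x, Phi_y, opX, opY, Module.End.mul_apply, LinearMap.add_apply, pderiv_X_self]

lemma ev_yy : ev F (Wy F * Wy F) = X 1 * X 1 := by
  simp [ev, Phi_x, Phi_y, opY, Module.End.mul_apply, LinearMap.add_apply, pderiv_X_of_ne]

-- membership lemmas
lemma Wx_mem : Wx F ∈ WV F := Submodule.subset_span (Or.inl rfl)
lemma Wy_mem : Wy F ∈ WV F := Submodule.subset_span (Or.inr rfl)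

-- basis lemma
lemma basis_apply (l : List ℕ) :
    FreeAlgebra.basisFreeMonoid F ℕ (FreeMonoid.ofList l) = (l.map (FreeAlgebra.ι F)).prod := by
  rw [FreeAlgebra.basisFreeMonoid, Module.Basis.map_apply, Finsupp.coe_basisSingleOne]
  show (FreeAlgebra.equivMonoidAlgebraFreeMonoid (R := F) (X := ℕ)).symm.toLinearEquiv
      ((MonoidAlgebra.coeffLinearEquiv F).symm (Finsupp.single (FreeMonoid.ofList l) 1)) = _
  have : (MonoidAlgebra.coeffLinearEquiv F).symm (Finsupp.single (FreeMonoid.ofList l) (1:F)) =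
      MonoidAlgebra.of F (FreeMonoid ℕ) (FreeMonoid.ofList l) := rfl
  rw [this]
  change (FreeAlgebra.equivMonoidAlgebraFreeMonoid (R := F) (X := ℕ)).symm _ = _
  rw [FreeAlgebra.equivMonoidAlgebraFreeMonoid]
  simp [AlgEquiv.ofAlgHom, MonoidAlgebra.lift_of, FreeMonoid.lift_ofList]

-- coefficient facts
lemma c0_XX (i j : Fin 2) : coeff (0 : Fin 2 →₀ ℕ) (X i * X j : MvPolynomial (Fin 2) F) = 0 := by
  rw [coeff_mul_X']; simp

lemma c1_one : coeff (Finsupp.single 0 1) (1 : MvPolynomial (Fin 2) F) = 0 := by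
  rw [coeff_one]; simp [eq_comm, Finsupp.single_eq_zero]

lemma c1_X1 : coeff (Finsupp.single 0 1) (X 1 : MvPolynomial (Fin 2) F) = 0 := by
  rw [coeff_X']; simp [Finsupp.single_eq_single_iff]

lemma c1_XX (i j : Fin 2) :
    coeff (Finsupp.single 0 1) (X i * X j : MvPolynomial (Fin 2) F) = 0 := by
  rw [coeff_mul_X']
  split
  · rename_i h
    have : j = 0 := by simpa [Finsupp.support_single_ne_zero] using h
    subst this
    simp [coeff_X']
  · rfl

lemma sub_single : (Finsupp.single (0:Fin 2) 2 - Finsupp.single 0 1) = Finsupp.single 0 1 := by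
  ext a; simp [Finsupp.single_apply]; split <;> rfl

lemma c2_one : coeff (Finsupp.single 0 2) (1 : MvPolynomial (Fin 2) F) = 0 := by
  rw [coeff_one]; simp [eq_comm, Finsupp.single_eq_zero]

lemma c2_X (i : Fin 2) : coeff (Finsupp.single 0 2) (X i : MvPolynomial (Fin 2) F) = 0 := by
  rw [coeff_X']
  have : Finsupp.single i 1 ≠ Finsupp.single (0:Fin 2) 2 := by
    intro h
    rcases Finsupp.single_eq_single_iff _ _ _ _ |>.1 h with ⟨_, h2⟩ | ⟨h1, _⟩ <;> omega
  simp [this]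

lemma c2_X0X0 : coeff (Finsupp.single 0 2) (X 0 * X 0 : MvPolynomial (Fin 2) F) = 1 := by
  rw [coeff_mul_X']
  have h1 : (0:Fin 2) ∈ (Finsupp.single (0:Fin 2) 2).support := by simp
  rw [if_pos h1, sub_single]; simp

lemma c2_X0X1 : coeff (Finsupp.single 0 2) (X 0 * X 1 : MvPolynomial (Fin 2) F) = 0 := by
  rw [coeff_mul_X']
  split
  · rename_i h
    simp [Finsupp.support_single_ne_zero] at h
  · rfl

lemma c2_X1X0 : coeff (Finsupp.single 0 2) (X 1 * X 0 : MvPolynomial (Fin 2) F) = 0 := by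
  rw [coeff_mul_X']
  split
  · rw [sub_single, coeff_X']
    simp [Finsupp.single_eq_single_iff]
  · rfl

lemma c2_X1X1 : coeff (Finsupp.single 0 2) (X 1 * X 1 : MvPolynomial (Fin 2) F) = 0 := by
  rw [coeff_mul_X']
  split
  · rename_i h
    simp [Finsupp.support_single_ne_zero] at h
  · rfl

lemma c1_X1X0 : coeff (Finsupp.single 0 1) (X 1 * X 0 : MvPolynomial (Fin 2) F) = 0 := by
  rw [coeff_mul_X']
  split
  · simp
  · rfl

-- key evaluation identity
lemma key (f : FreeAlgebra F ℕ)
    (hid : ∀ u : ℕ → Weyl F, (∀ i, u i ∈ WV F) → FreeAlgebra.lift F u f = 0)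
    (u : ℕ → Weyl F) (hu : ∀ i, u i ∈ WV F) (m : Fin 2 →₀ ℕ) :
    ((FreeAlgebra.basisFreeMonoid F ℕ).repr f).sum
      (fun w r => r * coeff m (ev F (((FreeMonoid.toList w).map u).prod))) = 0 := by
  classical
  set b := FreeAlgebra.basisFreeMonoid F ℕ with hb
  let L : FreeAlgebra F ℕ →ₗ[F] F :=
    (MvPolynomial.lcoeff F m).comp ((ev F).comp (FreeAlgebra.lift F u).toLinearMap)
  have hL : L f = 0 := by
    simp only [L, LinearMap.comp_apply, AlgHom.toLinearMap_apply, hid u hu, map_zero]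
  have hf : (Finsupp.linearCombination F b) (b.repr f) = f := b.linearCombination_repr f
  have hterm : ∀ w : FreeMonoid ℕ, L (b w) =
      coeff m (ev F (((FreeMonoid.toList w).map u).prod)) := by
    intro w
    have hw : b w = (((FreeMonoid.toList w).map (FreeAlgebra.ι F)).prod) := basis_apply F _
    have : (FreeAlgebra.lift F u) (((FreeMonoid.toList w).map (FreeAlgebra.ι F)).prod)
        = ((FreeMonoid.toList w).map u).prod := by
      rw [map_list_prod, List.map_map]
      congr 1
      simp [Function.comp_def]
    simp [L, hw, this]
  calc ((b.repr f).sum fun w r => r * coeff m (ev F (((FreeMonoid.toList w).map u).prod)))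
      = (b.repr f).sum (fun w r => L (r • b w)) := by
        apply Finsupp.sum_congr
        intro w _
        rw [map_smul, hterm w, smul_eq_mul]
    _ = L ((b.repr f).sum fun w r => r • b w) := (map_finsuppSum L _ _).symm
    _ = L f := by rw [← Finsupp.linearCombination_apply, hf]
    _ = 0 := hL

end Aux

set_option maxHeartbeats 1000000 in
/-- Any weak polynomial identity for (A₁, V) of degree at most 2 is zero. Here
"degree ≤ 2" means lying in the span of words of length ≤ 2 in the free algebra. -/
theorem weyl_no_weak_identity_deg_le_two (F : Type) [Field F] [Infinite F]
    (f : FreeAlgebra F ℕ)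
    (hdeg : f ∈ Submodule.span F
      {w : FreeAlgebra F ℕ | ∃ l : List ℕ, l.length ≤ 2 ∧ w = (l.map (FreeAlgebra.ι F)).prod})
    (hid : ∀ u : ℕ → Weyl F, (∀ i, u i ∈ WV F) → FreeAlgebra.lift F u f = 0) :
    f = 0 := by
  classical
  set b := FreeAlgebra.basisFreeMonoid F ℕ with hb
  set c := b.repr f with hc
  have hsupp : ∀ w : FreeMonoid ℕ, c w ≠ 0 → (FreeMonoid.toList w).length ≤ 2 := by
    have hmem : f ∈ Submodule.span F (b '' {w | (FreeMonoid.toList w).length ≤ 2}) := by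
      refine Submodule.span_mono ?_ hdeg
      rintro w ⟨l, hl, rfl⟩
      exact ⟨FreeMonoid.ofList l, by simpa [FreeMonoid.toList_ofList] using hl,
        by rw [hb]; exact basis_apply F l⟩
    intro w hw
    exact (b.mem_span_image).1 hmem (Finsupp.mem_support_iff.2 hw)
  -- claim 1 : constant coefficient is zero
  have claim1 : c 1 = 0 := by
    have h := key F f hid 0 (fun i => (WV F).zero_mem) 0
    rw [Finsupp.sum_eq_single 1] at h
    · simpa [FreeMonoid.toList_one, ev_one] using h
    · intro w hw hne
      have hwl : w = FreeMonoid.ofList (FreeMonoid.toList w) := rfl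
      rcases hl : FreeMonoid.toList w with _ | ⟨k, t⟩
      · rw [hl] at hwl; exact absurd hwl hne
      · simp
    · simp
  -- claim 2 : linear coefficients are zero
  have claim2 : ∀ i : ℕ, c (FreeMonoid.ofList [i]) = 0 := by
    intro i
    set u : ℕ → Weyl F := fun k => if k = i then Wx F else 0 with hu_def
    have hu : ∀ k, u k ∈ WV F := by
      intro k; by_cases hk : k = i <;> simp [hu_def, hk, Wx_mem, (WV F).zero_mem]
    have h := key F f hid u hu (Finsupp.single 0 1)
    rw [Finsupp.sum_eq_single (FreeMonoid.ofList [i])] at h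
    · simpa [FreeMonoid.toList_ofList, hu_def, ev_x] using h
    · intro w hw hne
      have hlen := hsupp w hw
      have hwl : w = FreeMonoid.ofList (FreeMonoid.toList w) := rfl
      rcases hl : FreeMonoid.toList w with _ | ⟨k, _ | ⟨k', _ | ⟨k'', t⟩⟩⟩
      · simp [ev_one, c1_one]
      · rw [hl] at hwl
        have hk : k ≠ i := fun h' => hne (by rw [hwl, h'])
        simp [hu_def, hk]
      · by_cases hk : k = i <;> by_cases hk' : k' = i <;>
          simp [hu_def, hk, hk', ev_xx, c1_XX, c1_X1]
      · rw [hl] at hlen; simp at hlen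
    · simp
  -- claim 3 : diagonal quadratic coefficients are zero
  have claim3 : ∀ i : ℕ, c (FreeMonoid.ofList [i, i]) = 0 := by
    intro i
    set u : ℕ → Weyl F := fun k => if k = i then Wx F else 0 with hu_def
    have hu : ∀ k, u k ∈ WV F := by
      intro k; by_cases hk : k = i <;> simp [hu_def, hk, Wx_mem, (WV F).zero_mem]
    have h := key F f hid u hu (Finsupp.single 0 2)
    rw [Finsupp.sum_eq_single (FreeMonoid.ofList [i, i])] at h
    · simpa [FreeMonoid.toList_ofList, hu_def, ev_xx, c2_X0X0] using h
    · intro w hw hne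
      have hlen := hsupp w hw
      have hwl : w = FreeMonoid.ofList (FreeMonoid.toList w) := rfl
      rcases hl : FreeMonoid.toList w with _ | ⟨k, _ | ⟨k', _ | ⟨k'', t⟩⟩⟩
      · simp [ev_one, c2_one]
      · by_cases hk : k = i <;> simp [hu_def, hk, ev_x, c2_X]
      · rw [hl] at hwl
        have hki : ¬(k = i ∧ k' = i) := by
          rintro ⟨rfl, rfl⟩; exact hne hwl
        by_cases hk : k = i <;> by_cases hk' : k' = i <;>
          simp [hu_def, hk, hk', ev_xx, c2_X0X0] <;> tauto
      · rw [hl] at hlen; simp at hlen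
    · simp
  -- claim 4 : off-diagonal quadratic coefficients are zero
  have claim4 : ∀ i j : ℕ, i ≠ j → c (FreeMonoid.ofList [i, j]) = 0 := by
    intro i j hij
    set u : ℕ → Weyl F := fun k => if k = i then Wy F else if k = j then Wx F else 0 with hu_def
    have hu : ∀ k, u k ∈ WV F := by
      intro k
      by_cases hk : k = i
      · simp [hu_def, hk, Wy_mem]
      · by_cases hk' : k = j <;> simp [hu_def, hk, hk', Ne.symm hij, Wx_mem, (WV F).zero_mem]
    have h := key F f hid u hu 0
    rw [Finsupp.sum_eq_single (FreeMonoid.ofList [i, j])] at h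
    · have hji : j ≠ i := fun h' => hij h'.symm
      have hprod : (List.map u (FreeMonoid.toList (FreeMonoid.ofList [i, j]))).prod
          = Wy F * Wx F := by
        rw [FreeMonoid.toList_ofList]; simp [hu_def, hji]
      rw [hprod, ev_yx] at h
      simpa [c0_XX] using h
    · intro w hw hne
      have hlen := hsupp w hw
      have hwl : w = FreeMonoid.ofList (FreeMonoid.toList w) := rfl
      rcases hl : FreeMonoid.toList w with _ | ⟨k, _ | ⟨k', _ | ⟨k'', t⟩⟩⟩
      · rw [hl] at hwl
        rw [hwl] at hw
        exact absurd claim1 hw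
      · by_cases hk : k = i
        · simp [hu_def, hk, ev_y]
        · by_cases hk' : k = j <;> simp [hu_def, hk, hk', Ne.symm hij, ev_x, ev_y]
      · rw [hl] at hwl
        have hne' : ¬(k = i ∧ k' = j) := by
          rintro ⟨rfl, rfl⟩; exact hne hwl
        by_cases hk1 : k = i <;> by_cases hk2 : k = j <;>
          by_cases hk1' : k' = i <;> by_cases hk2' : k' = j <;>
          first
            | omega
            | (simp [hu_def, hk1, hk2, hk1', hk2', Ne.symm hij, ev_xx, ev_xy, ev_yx, ev_yy,
                c0_XX] <;> tauto)
      · rw [hl] at hlen; simp at hlen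
    · simp
  have hcz : c = 0 := by
    ext w
    rw [Finsupp.coe_zero, Pi.zero_apply]
    by_cases hw : c w = 0
    · exact hw
    exfalso
    have hlen := hsupp w hw
    have hwl : w = FreeMonoid.ofList (FreeMonoid.toList w) := rfl
    rcases hl : FreeMonoid.toList w with _ | ⟨k, _ | ⟨k', _ | ⟨k'', t⟩⟩⟩ <;>
      rw [hl] at hwl
    · rw [hwl] at hw; exact hw claim1
    · rw [hwl] at hw; exact hw (claim2 k)
    · rw [hwl] at hw
      by_cases hkk : k = k'
      · subst hkk; exact hw (claim3 k)
      · exact hw (claim4 k k' hkk)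
    · rw [hl] at hlen; simp at hlen
  have : b.repr f = 0 := hcz
  exact b.repr.map_eq_zero_iff.1 this
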